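/- For the Abelian distribution with parameters N and p = α/N where 0 < α < 1, the variance satisfies lim_{N→∞} V(Z_{N,α/N}) = α/(1-α)^3. -/

import Mathlib

open Finset

/-- Density of the Abelian distribution with parameters `N` and `p`,
evaluated at `b`. -/
noncomputable def abelianP (N : ℕ) (p : ℝ) (b : ℕ) : ℝ :=
  ((1 - N * p) / (1 - ((N : ℝ) - 1) * p)) * ((N - 1).choose (b - 1)) *
    p ^ (b - 1) * (1 - b * p) ^ ((N : ℤ) - b - 1) * (b : ℝ) ^ ((b : ℤ) - 2)

/-- Closed form for the `B` family: a function of `x+y` only. -/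
noncomputable def abelG (n : ℕ) (s : ℝ) : ℝ :=
  ∑ j ∈ Finset.range (n+1), (n.descFactorial j : ℝ) * s^(n-j)

noncomputable def abelA (n : ℕ) (x y : ℝ) : ℝ :=
  y^n + ∑ j ∈ Finset.range n, (n.choose (j+1) : ℝ) * x * (x+(j:ℝ)+1)^j * (y-(j:ℝ)-1)^(n-1-j)

noncomputable def abelB (n : ℕ) (x y : ℝ) : ℝ :=
  ∑ k ∈ Finset.range (n+1), (n.choose k : ℝ) * (x+(k:ℝ))^k * (y-(k:ℝ))^(n-k)

theorem abelAB (n : ℕ) (x y : ℝ) :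
    abelA n x y = (x+y)^n ∧ abelB n x y = abelG n (x+y) := by
  induction n generalizing x y with
  | zero => simp [abelA, abelB, abelG]
  | succ n ih =>
    have hB1 : abelB n (x+1) (y-1) = abelG n (x+y) := by
      have := (ih (x+1) (y-1)).2
      rwa [show x+1+(y-1) = x+y by ring] at this
    have hBsplit : abelB n x y
        = (∑ j ∈ Finset.range n, (n.choose (j+1) : ℝ) * (x+(j:ℝ)+1)^(j+1) * (y-(j:ℝ)-1)^(n-1-j)) + y^n := by
      rw [abelB, Finset.sum_range_succ']
      congr 1
      · apply Finset.sum_congr rfl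
        intro j hj
        simp only [mem_range] at hj
        have : n - (j+1) = n - 1 - j := by omega
        rw [this]
        push_cast
        ring_nf
      · simp
    have hA : abelA (n+1) x y = (x+y)^(n+1) := by
      have key : ∀ j ∈ Finset.range (n+1), ((n+1).choose (j+1) : ℝ) * x * (x+(j:ℝ)+1)^j * (y-(j:ℝ)-1)^(n+1-1-j)
          = (n.choose (j+1) : ℝ) * x * (x+(j:ℝ)+1)^j * (y-(j:ℝ)-1)^(n-j)
            + (n.choose j : ℝ) * x * (x+(j:ℝ)+1)^j * (y-(j:ℝ)-1)^(n-j) := by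
        intro j hj
        rw [Nat.choose_succ_succ n j]
        have : n+1-1-j = n-j := by omega
        rw [this]
        push_cast
        ring
      rw [abelA, Finset.sum_congr rfl key, Finset.sum_add_distrib]
      -- second sum is x * abelB n (x+1) (y-1)
      have h2 : ∑ j ∈ Finset.range (n+1), (n.choose j : ℝ) * x * (x+(j:ℝ)+1)^j * (y-(j:ℝ)-1)^(n-j)
          = x * abelB n (x+1) (y-1) := by
        rw [abelB, Finset.mul_sum]
        apply Finset.sum_congr rfl
        intro j hj
        have e1 : x+1+(j:ℝ) = x+(j:ℝ)+1 := by ring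
        have e2 : y-1-(j:ℝ) = y-(j:ℝ)-1 := by ring
        rw [e1, e2]; ring
      -- first sum: drop last term (choose = 0), then split power
      have h1 : ∑ j ∈ Finset.range (n+1), (n.choose (j+1) : ℝ) * x * (x+(j:ℝ)+1)^j * (y-(j:ℝ)-1)^(n-j)
          = (x+y) * (abelA n x y - y^n) - x * (abelB n x y - y^n) := by
        rw [Finset.sum_range_succ]
        simp only [Nat.choose_succ_self, Nat.cast_zero, zero_mul, mul_zero, zero_mul, add_zero]
        have step : ∀ j ∈ Finset.range n, (n.choose (j+1) : ℝ) * x * (x+(j:ℝ)+1)^j * (y-(j:ℝ)-1)^(n-j)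
            = (x+y) * ((n.choose (j+1) : ℝ) * x * (x+(j:ℝ)+1)^j * (y-(j:ℝ)-1)^(n-1-j))
              - x * ((n.choose (j+1) : ℝ) * (x+(j:ℝ)+1)^(j+1) * (y-(j:ℝ)-1)^(n-1-j)) := by
          intro j hj
          simp only [mem_range] at hj
          have e : n - j = (n-1-j) + 1 := by omega
          rw [e, pow_succ]
          ring
        rw [Finset.sum_congr rfl step, Finset.sum_sub_distrib, ← Finset.mul_sum, ← Finset.mul_sum]
        rw [abelA, hBsplit]
        ring
      rw [h1, h2, (ih x y).1, hB1]
      have hBn : abelB n x y = abelG n (x+y) := (ih x y).2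
      rw [hBn]
      ring
    refine ⟨hA, ?_⟩
    -- B part
    have hBsucc : abelB (n+1) x y = abelA (n+1) x y + (n+1) * abelB n (x+1) (y-1) := by
      rw [abelB, Finset.sum_range_succ']
      have key : ∀ j ∈ Finset.range (n+1), ((n+1).choose (j+1) : ℝ) * (x+(↑(j+1):ℝ))^(j+1) * (y-(↑(j+1):ℝ))^(n+1-(j+1))
          = ((n+1).choose (j+1) : ℝ) * x * (x+(j:ℝ)+1)^j * (y-(j:ℝ)-1)^(n+1-1-j)
            + (n+1) * ((n.choose j : ℝ) * (x+1+(j:ℝ))^j * (y-1-(j:ℝ))^(n-j)) := by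
        intro j hj
        have e : n+1-(j+1) = n-j := by omega
        have e2 : n+1-1-j = n-j := by omega
        rw [e, e2]
        have hc : ((n+1).choose (j+1) : ℝ) * (j+1) = (n+1) * (n.choose j : ℝ) := by
          have := Nat.add_one_mul_choose_eq n j
          have : ((n+1) * n.choose j : ℕ) = ((n+1).choose (j+1) * (j+1) : ℕ) := this
          exact_mod_cast (congrArg (fun m : ℕ => (m : ℝ)) this).symm
        have expand : (x+(↑(j+1):ℝ))^(j+1) = x * (x+(j:ℝ)+1)^j + ((j:ℝ)+1) * (x+(j:ℝ)+1)^j := by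
          push_cast
          rw [pow_succ]
          ring
        push_cast at expand ⊢
        rw [expand]
        have e3 : y - ((j:ℝ)+1) = y-(j:ℝ)-1 := by ring
        have e4 : y-1-(j:ℝ) = y-(j:ℝ)-1 := by ring
        rw [e3, e4]
        have e5 : x+1+(j:ℝ) = x+(j:ℝ)+1 := by ring
        rw [e5]
        linear_combination ((x+(j:ℝ)+1)^j * (y-(j:ℝ)-1)^(n-j)) * hc
      rw [Finset.sum_congr rfl key, Finset.sum_add_distrib, ← Finset.mul_sum]
      have e0 : ((n+1).choose 0 : ℝ) * (x+(↑(0:ℕ):ℝ))^(0:ℕ) * (y-(↑(0:ℕ):ℝ))^(n+1-0) = y^(n+1) := by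
        simp
      rw [e0, abelA, abelB]
      ring
    rw [hBsucc, hA, hB1]
    have expand : abelG (n+1) (x+y) = (x+y)^(n+1) + (n+1) * abelG n (x+y) := by
      rw [abelG, Finset.sum_range_succ']
      have key2 : ∀ j ∈ Finset.range (n+1), (((n+1).descFactorial (j+1) : ℕ) : ℝ) * (x+y)^(n+1-(j+1))
          = (n+1) * ((n.descFactorial j : ℝ) * (x+y)^(n-j)) := by
        intro j hj
        rw [Nat.succ_descFactorial_succ]
        have e : n+1-(j+1) = n-j := by omega
        rw [e]
        push_cast
        ring
      rw [Finset.sum_congr rfl key2, ← Finset.mul_sum, abelG]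
      simp
      ring
    rw [expand]

theorem abel_diamond (n : ℕ) (x y : ℝ) (hy : y - (n:ℝ) ≠ 0) :
    ∑ j ∈ Finset.range n, (n.choose j : ℝ) * (x+(j:ℝ))^j * (y-(j:ℝ))^(n-1-j)
      = ((x+y)^n - (x+(n:ℝ))^n) / (y-(n:ℝ)) := by
  have h := (abelAB n (y-(n:ℝ)) (x+(n:ℝ))).1
  rw [show y-(n:ℝ)+(x+(n:ℝ)) = x+y by ring, abelA] at h
  have refl := Finset.sum_range_reflect
    (fun j => (n.choose (j+1) : ℝ) * (y-(n:ℝ)) * (y-(n:ℝ)+(j:ℝ)+1)^j * (x+(n:ℝ)-(j:ℝ)-1)^(n-1-j)) n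
  rw [← refl] at h
  have congr1 : ∀ j ∈ Finset.range n,
      (n.choose ((n-1-j)+1) : ℝ) * (y-(n:ℝ)) * (y-(n:ℝ)+(↑(n-1-j):ℝ)+1)^(n-1-j) * (x+(n:ℝ)-(↑(n-1-j):ℝ)-1)^(n-1-(n-1-j))
      = (y-(n:ℝ)) * ((n.choose j : ℝ) * (x+(j:ℝ))^j * (y-(j:ℝ))^(n-1-j)) := by
    intro j hj
    simp only [mem_range] at hj
    have e1 : n-1-j+1 = n-j := by omega
    have e2 : n-1-(n-1-j) = j := by omega
    have e3 : ((n-1-j : ℕ) : ℝ) = (n:ℝ)-1-(j:ℝ) := by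
      have : (n-1-j : ℕ) = n - (1+j) := by omega
      rw [this]
      push_cast [Nat.cast_sub (by omega : 1+j ≤ n)]
      ring
    have e4 : n.choose (n-j) = n.choose j := Nat.choose_symm (by omega)
    rw [e1, e2, e3, e4]
    have e5 : y-(n:ℝ)+((n:ℝ)-1-(j:ℝ))+1 = y-(j:ℝ) := by ring
    have e6 : x+(n:ℝ)-((n:ℝ)-1-(j:ℝ))-1 = x+(j:ℝ) := by ring
    rw [e5, e6]
    ring
  rw [Finset.sum_congr rfl congr1, ← Finset.mul_sum] at h
  field_simp
  linarith [h]

theorem abelW (n : ℕ) (x y : ℝ) (hy : y - (n:ℝ) ≠ 0) :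
    ∑ j ∈ Finset.range n, (n.choose j : ℝ) * (x+(j:ℝ))^(j+1) * (y-(j:ℝ))^(n-1-j)
      = (x+y) * (((x+y)^n - (x+(n:ℝ))^n) / (y-(n:ℝ))) - abelG n (x+y) + (x+(n:ℝ))^n := by
  have split : ∀ j ∈ Finset.range n, (n.choose j : ℝ) * (x+(j:ℝ))^(j+1) * (y-(j:ℝ))^(n-1-j)
      = (x+y) * ((n.choose j : ℝ) * (x+(j:ℝ))^j * (y-(j:ℝ))^(n-1-j))
        - (n.choose j : ℝ) * (x+(j:ℝ))^j * (y-(j:ℝ))^(n-j) := by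
    intro j hj
    simp only [mem_range] at hj
    have e : n-j = (n-1-j)+1 := by omega
    rw [e, pow_succ, pow_succ]
    ring
  rw [Finset.sum_congr rfl split, Finset.sum_sub_distrib, ← Finset.mul_sum, abel_diamond n x y hy]
  have hB : ∑ j ∈ Finset.range n, (n.choose j : ℝ) * (x+(j:ℝ))^j * (y-(j:ℝ))^(n-j)
      = abelB n x y - (x+(n:ℝ))^n := by
    rw [abelB, Finset.sum_range_succ]
    simp
  rw [hB, (abelAB n x y).2]
  ring

theorem pow_pred_mul_inv_pow (n : ℕ) (p : ℝ) (hp : p ≠ 0) (hn : 0 < n) :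
    p^(n-1) * (1/p)^n = 1/p := by
  have e : (1/p)^n = (1/p)^(n-1) * (1/p) := by
    rw [← pow_succ]
    congr 1
    omega
  rw [e, ← mul_assoc]
  rw [show p^(n-1) * (1/p)^(n-1) = (p * (1/p))^(n-1) from (mul_pow _ _ _).symm]
  field_simp
  simp

theorem pow_pred_mul_pow (n : ℕ) (p x : ℝ) (hp : p ≠ 0) (hn : 0 < n) :
    p^(n-1) * x^n = (x*p)^n / p := by
  have e : (x*p)^n = x^n * p^n := by rw [mul_pow]
  have hpn : p^n = p^(n-1) * p := by
    rw [← pow_succ]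
    congr 1
    omega
  rw [e, hpn]
  field_simp

theorem specI1 (n : ℕ) (p : ℝ) (hp : p ≠ 0) (h1 : 1 - ((n:ℝ)+1)*p ≠ 0) :
    ∑ j ∈ Finset.range n, (n.choose j : ℝ) * ((j:ℝ)+1)^j * p^j * (1-((j:ℝ)+1)*p)^(n-1-j)
      = ∑ i ∈ Finset.range n, (((n:ℝ)+1)*p)^i := by
  rcases Nat.eq_zero_or_pos n with h0 | hn
  · subst h0; simp
  have hy : (1/p - 1) - (n:ℝ) ≠ 0 := by
    field_simp
    intro h
    apply h1
    rw [div_eq_zero_iff] at h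
    rcases h with h | h
    · linarith
    · exact absurd h hp
  have h := abel_diamond n 1 (1/p - 1) hy
  have hmul := congrArg (fun z => p^(n-1) * z) h
  rw [Finset.mul_sum] at hmul
  have congr1 : ∀ j ∈ Finset.range n,
      p^(n-1) * ((n.choose j : ℝ) * (1+(j:ℝ))^j * ((1/p-1)-(j:ℝ))^(n-1-j))
      = (n.choose j : ℝ) * ((j:ℝ)+1)^j * p^j * (1-((j:ℝ)+1)*p)^(n-1-j) := by
    intro j hj
    simp only [Finset.mem_range] at hj
    have epow : p^(n-1) = p^j * p^(n-1-j) := by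
      rw [← pow_add]
      congr 1
      omega
    have e2 : p^(n-1-j) * ((1/p-1)-(j:ℝ))^(n-1-j) = (1-((j:ℝ)+1)*p)^(n-1-j) := by
      rw [← mul_pow]
      congr 1
      field_simp
      ring
    rw [epow]
    calc p^j * p^(n-1-j) * ((n.choose j : ℝ) * (1+(j:ℝ))^j * ((1/p-1)-(j:ℝ))^(n-1-j))
        = ((n.choose j : ℝ) * (1+(j:ℝ))^j * p^j) * (p^(n-1-j) * ((1/p-1)-(j:ℝ))^(n-1-j)) := by ring
      _ = _ := by rw [e2]; ring
  rw [Finset.sum_congr rfl congr1] at hmul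
  rw [hmul]
  have e1 : (1:ℝ)+(1/p-1) = 1/p := by ring
  have e2 : (1/p-1)-(n:ℝ) = (1 - ((n:ℝ)+1)*p)/p := by
    rw [eq_div_iff hp]
    field_simp
    ring
  rw [e1, e2]
  have ebr : p^(n-1) * ((1/p)^n - (1+(n:ℝ))^n) = (1 - (((n:ℝ)+1)*p)^n) / p := by
    rw [mul_sub, pow_pred_mul_inv_pow n p hp hn, pow_pred_mul_pow n p (1+(n:ℝ)) hp hn]
    rw [show (1+(n:ℝ))*p = ((n:ℝ)+1)*p by ring]
    ring
  rw [mul_div_assoc'] at *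
  rw [show p^(n-1) * ((1/p)^n - (1+(n:ℝ))^n) / ((1 - ((n:ℝ)+1)*p)/p)
      = (p^(n-1) * ((1/p)^n - (1+(n:ℝ))^n)) / ((1 - ((n:ℝ)+1)*p)/p) from rfl]
  rw [ebr, div_div_div_cancel_right₀ hp]
  rw [eq_comm, eq_div_iff h1]
  have := geom_sum_mul (((n:ℝ)+1)*p) n
  linarith [this]

theorem specI2 (n : ℕ) (p : ℝ) (hp : p ≠ 0) (h1 : 1 - ((n:ℝ)+1)*p ≠ 0) :
    ∑ j ∈ Finset.range n, (n.choose j : ℝ) * ((j:ℝ)+1)^(j+1) * p^j * (1-((j:ℝ)+1)*p)^(n-1-j)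
      = (1/p) * ((1 - (((n:ℝ)+1)*p)^n)/(1-((n:ℝ)+1)*p) + (((n:ℝ)+1)*p)^n
          - ∑ j ∈ Finset.range (n+1), (n.descFactorial j : ℝ) * p^j) := by
  rcases Nat.eq_zero_or_pos n with h0 | hn
  · subst h0; simp
  have hy : (1/p - 1) - (n:ℝ) ≠ 0 := by
    field_simp
    intro h
    apply h1
    rw [div_eq_zero_iff] at h
    rcases h with h | h
    · linarith
    · exact absurd h hp
  have h := abelW n 1 (1/p - 1) hy
  have hmul := congrArg (fun z => p^(n-1) * z) h
  rw [Finset.mul_sum] at hmul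
  have congr1 : ∀ j ∈ Finset.range n,
      p^(n-1) * ((n.choose j : ℝ) * (1+(j:ℝ))^(j+1) * ((1/p-1)-(j:ℝ))^(n-1-j))
      = (n.choose j : ℝ) * ((j:ℝ)+1)^(j+1) * p^j * (1-((j:ℝ)+1)*p)^(n-1-j) := by
    intro j hj
    simp only [Finset.mem_range] at hj
    have epow : p^(n-1) = p^j * p^(n-1-j) := by
      rw [← pow_add]
      congr 1
      omega
    have e2 : p^(n-1-j) * ((1/p-1)-(j:ℝ))^(n-1-j) = (1-((j:ℝ)+1)*p)^(n-1-j) := by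
      rw [← mul_pow]
      congr 1
      field_simp
      ring
    rw [epow]
    calc p^j * p^(n-1-j) * ((n.choose j : ℝ) * (1+(j:ℝ))^(j+1) * ((1/p-1)-(j:ℝ))^(n-1-j))
        = ((n.choose j : ℝ) * (1+(j:ℝ))^(j+1) * p^j) * (p^(n-1-j) * ((1/p-1)-(j:ℝ))^(n-1-j)) := by
          ring
      _ = _ := by rw [e2]; ring
  rw [Finset.sum_congr rfl congr1] at hmul
  rw [hmul]
  have e1 : (1:ℝ)+(1/p-1) = 1/p := by ring
  have e2 : (1/p-1)-(n:ℝ) = (1 - ((n:ℝ)+1)*p)/p := by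
    rw [eq_div_iff hp]
    field_simp
    ring
  rw [e1, e2]
  set r : ℝ := ((n:ℝ)+1)*p with hr
  have ebr : p^(n-1) * ((1/p)^n - (1+(n:ℝ))^n) = (1 - r^n) / p := by
    rw [mul_sub, pow_pred_mul_inv_pow n p hp hn, pow_pred_mul_pow n p (1+(n:ℝ)) hp hn]
    rw [show (1+(n:ℝ))*p = r by rw [hr]; ring]
    ring
  have eG : p^(n-1) * abelG n (1/p) = (∑ j ∈ Finset.range (n+1), (n.descFactorial j : ℝ) * p^j) * (1/p) := by
    rw [abelG, Finset.mul_sum, Finset.sum_mul]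
    apply Finset.sum_congr rfl
    intro j hj
    simp only [Finset.mem_range] at hj
    have hpow : p^(n-1) * (1/p)^(n-j) = p^j * (1/p) := by
      rw [one_div, inv_pow, ← div_eq_mul_inv, ← div_eq_mul_inv,
        div_eq_div_iff (pow_ne_zero _ hp) hp, ← pow_succ, ← pow_add]
      congr 1
      omega
    calc p^(n-1) * ((n.descFactorial j : ℝ) * (1/p)^(n-j))
        = (n.descFactorial j : ℝ) * (p^(n-1) * (1/p)^(n-j)) := by ring
      _ = _ := by rw [hpow]; ring
  have eP3 : p^(n-1) * (1+(n:ℝ))^n = r^n / p := by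
    rw [pow_pred_mul_pow n p (1+(n:ℝ)) hp hn]
    rw [show (1+(n:ℝ))*p = r by rw [hr]; ring]
  have expand : p^(n-1) * ((1/p) * (((1/p)^n - (1+(n:ℝ))^n) / ((1-r)/p)) - abelG n (1/p) + (1+(n:ℝ))^n)
      = (1/p) * ((p^(n-1) * ((1/p)^n - (1+(n:ℝ))^n)) / ((1-r)/p)) - p^(n-1) * abelG n (1/p)
        + p^(n-1) * (1+(n:ℝ))^n := by ring
  rw [expand, ebr, eG, eP3, div_div_div_cancel_right₀ hp]
  ring

theorem sum_Icc_split (N : ℕ) (hN : 1 ≤ N) (f : ℕ → ℝ) :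
    ∑ b ∈ Finset.Icc 1 N, f b = (∑ j ∈ Finset.range (N-1), f (j+1)) + f N := by
  rw [show Finset.Icc 1 N = Finset.Ico 1 (N+1) from by rw [Finset.Ico_add_one_right_eq_Icc]]
  rw [Finset.sum_Ico_eq_sum_range]
  rw [show N + 1 - 1 = (N-1) + 1 from by omega, Finset.sum_range_succ]
  congr 1
  · apply Finset.sum_congr rfl
    intro j hj
    congr 1
    omega
  · congr 1
    omega

theorem abelianP_term (N : ℕ) (p : ℝ) (j : ℕ) (hj : j + 1 < N) :
    abelianP N p (j+1) = ((1-(N:ℝ)*p)/(1-((N:ℝ)-1)*p)) * ((N-1).choose j : ℝ)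
      * p^j * (1-((j:ℝ)+1)*p)^(N-2-j) * ((j:ℝ)+1)^((j:ℤ)-1) := by
  unfold abelianP
  have e1 : j + 1 - 1 = j := rfl
  have e2 : (N:ℤ) - (↑(j+1):ℕ) - 1 = ((N-2-j : ℕ) : ℤ) := by push_cast; omega
  rw [e1, e2, zpow_natCast]
  have e3 : ((↑(j+1):ℕ):ℝ) = (j:ℝ)+1 := by push_cast; ring
  rw [e3]
  have e4 : ((↑(j+1):ℕ):ℤ) - 2 = (j:ℤ) - 1 := by push_cast; omega
  rw [e4]

theorem abelianP_last (N : ℕ) (hN : 1 ≤ N) (p : ℝ) :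
    abelianP N p N = ((1-(N:ℝ)*p)/(1-((N:ℝ)-1)*p)) * p^(N-1) * (1-(N:ℝ)*p)⁻¹
      * (N:ℝ)^((N:ℤ)-2) := by
  unfold abelianP
  rw [Nat.choose_self]
  have e2 : (N:ℤ) - (N:ℕ) - 1 = -1 := by omega
  rw [e2, zpow_neg_one]
  push_cast
  ring

theorem S1_eq (N : ℕ) (hN : 1 ≤ N) (p : ℝ) (hp : p ≠ 0) (h1 : 1 - (N:ℝ)*p ≠ 0)
    (h2 : 1 - ((N:ℝ)-1)*p ≠ 0) :
    ∑ b ∈ Finset.Icc 1 N, (b:ℝ) * abelianP N p b = 1 / (1 - ((N:ℝ)-1)*p) := by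
  have hNR : (0:ℝ) < (N:ℝ) := by exact_mod_cast hN
  set cC := (1-(N:ℝ)*p)/(1-((N:ℝ)-1)*p) with hcC
  rw [sum_Icc_split N hN]
  have hmain : ∀ j ∈ Finset.range (N-1), ((↑(j+1):ℕ):ℝ) * abelianP N p (j+1)
      = cC * (((N-1).choose j : ℝ) * ((j:ℝ)+1)^j * p^j * (1-((j:ℝ)+1)*p)^((N-1)-1-j)) := by
    intro j hj
    simp only [Finset.mem_range] at hj
    rw [abelianP_term N p j (by omega)]
    have hc : ((j:ℝ)+1) ≠ 0 := by positivity
    have hz : ((↑(j+1):ℕ):ℝ) * ((j:ℝ)+1)^((j:ℤ)-1) = ((j:ℝ)+1)^(j:ℕ) := by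
      have e3 : ((↑(j+1):ℕ):ℝ) = (j:ℝ)+1 := by push_cast; ring
      rw [e3]
      have : ((j:ℝ)+1) * ((j:ℝ)+1)^((j:ℤ)-1) = ((j:ℝ)+1)^(1 + ((j:ℤ)-1)) := by
        rw [zpow_add₀ hc]
        simp
      rw [this, show (1:ℤ) + ((j:ℤ)-1) = ((j:ℕ):ℤ) from by omega, zpow_natCast]
    have e5 : N-2-j = (N-1)-1-j := by omega
    calc ((↑(j+1):ℕ):ℝ) * (cC * ((N-1).choose j : ℝ) * p^j * (1-((j:ℝ)+1)*p)^(N-2-j) * ((j:ℝ)+1)^((j:ℤ)-1))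
        = (((↑(j+1):ℕ):ℝ) * ((j:ℝ)+1)^((j:ℤ)-1)) * (cC * ((N-1).choose j : ℝ) * p^j * (1-((j:ℝ)+1)*p)^(N-2-j)) := by
          ring
      _ = _ := by rw [hz, e5]; ring
  rw [Finset.sum_congr rfl hmain, ← Finset.mul_sum]
  have hI1 := specI1 (N-1) p hp (by rw [show ((N-1:ℕ):ℝ)+1 = (N:ℝ) from by push_cast [hN]; ring]; exact h1)
  rw [show ((N-1:ℕ):ℝ)+1 = (N:ℝ) from by push_cast [hN]; ring] at hI1
  have hre : ∑ j ∈ Finset.range (N-1), (((N-1).choose j : ℝ) * ((j:ℝ)+1)^j * p^j * (1-((j:ℝ)+1)*p)^((N-1)-1-j))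
      = ∑ j ∈ Finset.range (N-1), (((N-1).choose j : ℝ) * ((j:ℝ)+1)^j * p^j * (1-((j:ℝ)+1)*p)^((N-1)-1-j)) := rfl
  rw [show (∑ j ∈ Finset.range (N-1), (((N-1).choose j : ℝ) * ((j:ℝ)+1)^j * p^j * (1-((j:ℝ)+1)*p)^((N-1)-1-j)))
      = ∑ i ∈ Finset.range (N-1), ((N:ℝ)*p)^i from ?_]
  · -- last term
    have hlastz : (N:ℝ) * (N:ℝ)^((N:ℤ)-2) = (N:ℝ)^(N-1 : ℕ) := by
      have : (N:ℝ) * (N:ℝ)^((N:ℤ)-2) = (N:ℝ)^(1 + ((N:ℤ)-2)) := by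
        rw [zpow_add₀ (ne_of_gt hNR)]
        simp
      rw [this, show (1:ℤ) + ((N:ℤ)-2) = ((N-1:ℕ):ℤ) from by omega, zpow_natCast]
    rw [abelianP_last N hN p]
    have hgeom : ∑ i ∈ Finset.range (N-1), ((N:ℝ)*p)^i = (1 - ((N:ℝ)*p)^(N-1))/(1-(N:ℝ)*p) := by
      rw [eq_div_iff h1]
      have := geom_sum_mul ((N:ℝ)*p) (N-1)
      linarith
    rw [hgeom]
    have hNp : p^(N-1) * (N:ℝ)^(N-1:ℕ) = ((N:ℝ)*p)^(N-1) := by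
      rw [mul_pow]; ring
    calc cC * ((1 - ((N:ℝ)*p)^(N-1))/(1-(N:ℝ)*p))
          + (N:ℝ) * (cC * p^(N-1) * (1-(N:ℝ)*p)⁻¹ * (N:ℝ)^((N:ℤ)-2))
        = cC * ((1 - ((N:ℝ)*p)^(N-1))/(1-(N:ℝ)*p))
          + cC * (p^(N-1) * ((N:ℝ) * (N:ℝ)^((N:ℤ)-2))) * (1-(N:ℝ)*p)⁻¹ := by ring
      _ = cC * ((1 - ((N:ℝ)*p)^(N-1))/(1-(N:ℝ)*p)) + cC * ((N:ℝ)*p)^(N-1) * (1-(N:ℝ)*p)⁻¹ := by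
          rw [hlastz, hNp]
      _ = cC / (1-(N:ℝ)*p) := by field_simp; ring
      _ = 1 / (1 - ((N:ℝ)-1)*p) := by rw [hcC]; field_simp
  · exact hI1

theorem S2_eq (N : ℕ) (hN : 1 ≤ N) (p : ℝ) (hp : p ≠ 0) (h1 : 1 - (N:ℝ)*p ≠ 0)
    (h2 : 1 - ((N:ℝ)-1)*p ≠ 0) :
    ∑ b ∈ Finset.Icc 1 N, (b:ℝ)^2 * abelianP N p b
      = (1-(N:ℝ)*p)/(1-((N:ℝ)-1)*p) * (1/p)
          * (1/(1-(N:ℝ)*p) - ∑ j ∈ Finset.range N, ((N-1).descFactorial j : ℝ) * p^j) := by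
  have hNR : (0:ℝ) < (N:ℝ) := by exact_mod_cast hN
  set cC := (1-(N:ℝ)*p)/(1-((N:ℝ)-1)*p) with hcC
  rw [sum_Icc_split N hN]
  have hmain : ∀ j ∈ Finset.range (N-1), ((↑(j+1):ℕ):ℝ)^2 * abelianP N p (j+1)
      = cC * (((N-1).choose j : ℝ) * ((j:ℝ)+1)^(j+1) * p^j * (1-((j:ℝ)+1)*p)^((N-1)-1-j)) := by
    intro j hj
    simp only [Finset.mem_range] at hj
    rw [abelianP_term N p j (by omega)]
    have hc : ((j:ℝ)+1) ≠ 0 := by positivity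
    have hz : ((↑(j+1):ℕ):ℝ)^2 * ((j:ℝ)+1)^((j:ℤ)-1) = ((j:ℝ)+1)^(j+1:ℕ) := by
      have e3 : ((↑(j+1):ℕ):ℝ) = (j:ℝ)+1 := by push_cast; ring
      rw [e3]
      have e4 : ((j:ℝ)+1)^(2:ℕ) = ((j:ℝ)+1)^((2:ℕ):ℤ) := (zpow_natCast _ _).symm
      rw [e4, ← zpow_add₀ hc]
      rw [show ((2:ℕ):ℤ) + ((j:ℤ)-1) = ((j+1:ℕ):ℤ) from by push_cast; omega, zpow_natCast]
    have e5 : N-2-j = (N-1)-1-j := by omega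
    calc ((↑(j+1):ℕ):ℝ)^2 * (cC * ((N-1).choose j : ℝ) * p^j * (1-((j:ℝ)+1)*p)^(N-2-j) * ((j:ℝ)+1)^((j:ℤ)-1))
        = (((↑(j+1):ℕ):ℝ)^2 * ((j:ℝ)+1)^((j:ℤ)-1)) * (cC * ((N-1).choose j : ℝ) * p^j * (1-((j:ℝ)+1)*p)^(N-2-j)) := by
          ring
      _ = _ := by rw [hz, e5]; ring
  rw [Finset.sum_congr rfl hmain, ← Finset.mul_sum]
  have hcast : ((N-1:ℕ):ℝ)+1 = (N:ℝ) := by push_cast [hN]; ring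
  have hI2 := specI2 (N-1) p hp (by rw [hcast]; exact h1)
  rw [hcast] at hI2
  rw [show (N-1)+1 = N from by omega] at hI2
  rw [hI2]
  -- last term
  rw [abelianP_last N hN p]
  have hlastz : (N:ℝ)^2 * (N:ℝ)^((N:ℤ)-2) = (N:ℝ)^(N : ℕ) := by
    have e4 : (N:ℝ)^(2:ℕ) = (N:ℝ)^((2:ℕ):ℤ) := (zpow_natCast _ _).symm
    rw [e4, ← zpow_add₀ (ne_of_gt hNR)]
    rw [show ((2:ℕ):ℤ) + ((N:ℤ)-2) = ((N:ℕ):ℤ) from by push_cast; omega, zpow_natCast]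
  have hNp : p^(N-1) * (N:ℝ)^(N:ℕ) = ((N:ℝ)*p)^N / p := by
    have e : ((N:ℝ)*p)^N = (N:ℝ)^(N:ℕ) * p^N := by rw [mul_pow]
    have hpn : p^N = p^(N-1) * p := by
      rw [← pow_succ]
      congr 1
      omega
    rw [e, hpn]
    field_simp
  have hsec : ((N:ℝ))^2 * (cC * p^(N-1) * (1-(N:ℝ)*p)⁻¹ * (N:ℝ)^((N:ℤ)-2))
      = cC * (1/p) * (((N:ℝ)*p)^N / (1-(N:ℝ)*p)) := by
    calc ((N:ℝ))^2 * (cC * p^(N-1) * (1-(N:ℝ)*p)⁻¹ * (N:ℝ)^((N:ℤ)-2))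
        = ((N:ℝ)^2 * (N:ℝ)^((N:ℤ)-2)) * p^(N-1) * cC * (1-(N:ℝ)*p)⁻¹ := by ring
      _ = (p^(N-1) * (N:ℝ)^(N:ℕ)) * cC * (1-(N:ℝ)*p)⁻¹ := by rw [hlastz]; ring
      _ = (((N:ℝ)*p)^N / p) * cC * (1-(N:ℝ)*p)⁻¹ := by rw [hNp]
      _ = _ := by rw [div_eq_mul_inv, div_eq_mul_inv]; ring
  rw [hsec]
  have hpowsucc : ((N:ℝ)*p)^N = ((N:ℝ)*p)^(N-1) * ((N:ℝ)*p) := by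
    rw [← pow_succ]
    congr 1
    omega
  rw [hpowsucc]
  have h1' : 1 - p*(N:ℝ) ≠ 0 := by rwa [mul_comm]
  field_simp
  ring

theorem prod_one_sub_ge {ι : Type*} (s : Finset ι) (x : ι → ℝ) (h : ∀ i ∈ s, 0 ≤ x i ∧ x i ≤ 1) :
    1 - ∑ i ∈ s, x i ≤ ∏ i ∈ s, (1 - x i) := by
  induction s using Finset.cons_induction with
  | empty => simp
  | cons a s ha ih =>
    rw [Finset.prod_cons, Finset.sum_cons]
    have hxs : ∀ i ∈ s, 0 ≤ x i ∧ x i ≤ 1 := fun i hi => h i (Finset.mem_cons_of_mem hi)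
    have hxa := h a (Finset.mem_cons_self a s)
    have ihs := ih hxs
    have hsum : 0 ≤ ∑ i ∈ s, x i := Finset.sum_nonneg (fun i hi => (hxs i hi).1)
    nlinarith [hxa.1, hxa.2]

theorem prod_one_sub_le {ι : Type*} (s : Finset ι) (x : ι → ℝ) (h : ∀ i ∈ s, 0 ≤ x i ∧ x i ≤ 1) :
    ∏ i ∈ s, (1 - x i) ≤ 1 - ∑ i ∈ s, x i + (∑ i ∈ s, x i)^2 := by
  induction s using Finset.cons_induction with
  | empty => simp
  | cons a s ha ih =>
    rw [Finset.prod_cons, Finset.sum_cons]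
    have hxs : ∀ i ∈ s, 0 ≤ x i ∧ x i ≤ 1 := fun i hi => h i (Finset.mem_cons_of_mem hi)
    have hxa := h a (Finset.mem_cons_self a s)
    have ihs := ih hxs
    have hsum : 0 ≤ ∑ i ∈ s, x i := Finset.sum_nonneg (fun i hi => (hxs i hi).1)
    nlinarith [hxa.1, hxa.2]

theorem sum_range_real (j : ℕ) : ∑ i ∈ Finset.range j, ((i:ℝ)+1) = (j:ℝ)*((j:ℝ)+1)/2 := by
  induction j with
  | zero => simp
  | succ j ih =>
    rw [Finset.sum_range_succ, ih]
    push_cast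
    ring

theorem choose_two_cast (n : ℕ) : ((n+2).choose 2 : ℝ) = ((n:ℝ)+2)*((n:ℝ)+1)/2 := by
  have hch : 2 * ((n+2).choose 2) = (n+2)*(n+1) := by
    rw [Nat.choose_two_right]
    rw [Nat.mul_div_cancel']
    · rw [show n+2-1 = n+1 from rfl]
    · have hE : Even ((n+1) * ((n+1)+1)) := Nat.even_mul_succ_self (n+1)
      have e : (n+2) * (n+2-1) = (n+1) * ((n+1)+1) := by
        rw [show n+2-1 = n+1 from rfl]
        ring
      rw [e]
      exact hE.two_dvd
  have := congrArg (fun m : ℕ => (m:ℝ)) hch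
  push_cast at this
  linarith

theorem hasSum_jj (α : ℝ) (hα : 0 < α) (hα' : α < 1) :
    HasSum (fun j : ℕ => α^j * ((j:ℝ)*((j:ℝ)+1)/2)) (α/(1-α)^3) := by
  have hn : ‖α‖ < 1 := by rw [Real.norm_eq_abs, abs_of_pos hα]; exact hα'
  have h := (hasSum_choose_mul_geometric_of_norm_lt_one 2 hn).mul_left α
  rw [show α * (1/(1-α)^(2+1)) = α/(1-α)^3 from by ring] at h
  set f : ℕ → ℝ := fun j => α^j * ((j:ℝ)*((j:ℝ)+1)/2) with hf
  have hshift : (fun n : ℕ => f (n+1)) = (fun n : ℕ => α * (((n+2).choose 2 : ℝ) * α^n)) := by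
    funext n
    rw [hf]
    simp only
    rw [choose_two_cast n]
    push_cast
    ring
  have h1 : HasSum (fun n : ℕ => f (n+1)) (α/(1-α)^3) := by
    rw [hshift]
    exact h
  have h2 := (hasSum_nat_add_iff (f := f) 1).mp h1
  have hf0 : f 0 = 0 := by rw [hf]; simp
  simpa [hf0] using h2

open Filter in
theorem core_limit (α : ℝ) (hα : 0 < α) (hα' : α < 1) :
    Tendsto (fun N : ℕ => (N:ℝ) * (1/(1-α)
        - ∑ j ∈ Finset.range N, ((N-1).descFactorial j : ℝ) * (α/(N:ℝ))^j))
      atTop (nhds (α/(1-α)^3)) := by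
  have h1α : (0:ℝ) < 1 - α := by linarith
  have hn : ‖α‖ < 1 := by rw [Real.norm_eq_abs, abs_of_pos hα]; exact hα'
  set P : ℕ → ℕ → ℝ := fun N j => ∏ i ∈ Finset.range j, (1 - ((i:ℝ)+1)/(N:ℝ)) with hP
  set a : ℕ → ℝ := fun N => ∑ j ∈ Finset.range N, α^j * ((N:ℝ)*(1 - P N j)) with ha
  set u : ℕ → ℝ := fun N => ∑ j ∈ Finset.range N, α^j * ((j:ℝ)*((j:ℝ)+1)/2) with hu
  set K : ℝ := ∑' j : ℕ, α^j * ((j:ℝ)*((j:ℝ)+1)/2)^2 with hK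
  -- Summability of the error series
  have hgsum : Summable (fun j : ℕ => α^j * ((j:ℝ)*((j:ℝ)+1)/2)^2) := by
    have hbig : Summable (fun j : ℕ => (j:ℝ)^4 * α^j) :=
      summable_pow_mul_geometric_of_norm_lt_one 4 hn
    have hle : ∀ j : ℕ, α^j * ((j:ℝ)*((j:ℝ)+1)/2)^2 ≤ (j:ℝ)^4 * α^j := by
      intro j
      rcases Nat.eq_zero_or_pos j with h0 | hj
      · subst h0; simp
      have hj1 : (1:ℝ) ≤ (j:ℝ) := by exact_mod_cast hj
      have hα0 : (0:ℝ) ≤ α^j := by positivity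
      have hb : ((j:ℝ)*((j:ℝ)+1)/2)^2 ≤ (j:ℝ)^4 := by
        nlinarith [mul_nonneg (mul_nonneg (sq_nonneg (j:ℝ)) (by linarith : (0:ℝ) ≤ 3*(j:ℝ)+1)) (by linarith : (0:ℝ) ≤ (j:ℝ)-1)]
      calc α^j * ((j:ℝ)*((j:ℝ)+1)/2)^2 = ((j:ℝ)*((j:ℝ)+1)/2)^2 * α^j := by ring
        _ ≤ (j:ℝ)^4 * α^j := mul_le_mul_of_nonneg_right hb hα0
    exact Summable.of_nonneg_of_le (fun j => by positivity) hle hbig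
  have hgnn : ∀ j : ℕ, 0 ≤ α^j * ((j:ℝ)*((j:ℝ)+1)/2)^2 := fun j => by positivity
  -- bounds on P
  have hPbounds : ∀ N : ℕ, 1 ≤ N → ∀ j < N,
      1 - ((j:ℝ)*((j:ℝ)+1)/2)/(N:ℝ) ≤ P N j ∧
      P N j ≤ 1 - ((j:ℝ)*((j:ℝ)+1)/2)/(N:ℝ) + (((j:ℝ)*((j:ℝ)+1)/2)/(N:ℝ))^2 := by
    intro N hN j hj
    have hNR : (0:ℝ) < (N:ℝ) := by exact_mod_cast hN
    have hx : ∀ i ∈ Finset.range j, 0 ≤ ((i:ℝ)+1)/(N:ℝ) ∧ ((i:ℝ)+1)/(N:ℝ) ≤ 1 := by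
      intro i hi
      simp only [Finset.mem_range] at hi
      constructor
      · positivity
      · rw [div_le_one hNR]
        have : (i:ℝ)+1 ≤ (j:ℝ) := by exact_mod_cast hi
        have : (j:ℝ) ≤ (N:ℝ) := by exact_mod_cast le_of_lt hj
        push_cast
        have hij : (i:ℝ)+1 ≤ (j:ℝ) := by exact_mod_cast hi
        linarith
    have hSval : ∑ i ∈ Finset.range j, ((i:ℝ)+1)/(N:ℝ) = ((j:ℝ)*((j:ℝ)+1)/2)/(N:ℝ) := by
      rw [← Finset.sum_div, sum_range_real]
    constructor
    · have := prod_one_sub_ge (Finset.range j) (fun i => ((i:ℝ)+1)/(N:ℝ)) hx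
      rw [hSval] at this
      exact this
    · have := prod_one_sub_le (Finset.range j) (fun i => ((i:ℝ)+1)/(N:ℝ)) hx
      rw [hSval] at this
      exact this
  -- squeeze for a
  have hT := hasSum_jj α hα hα'
  have huT : Tendsto u atTop (nhds (α/(1-α)^3)) := hT.tendsto_sum_nat
  have hKdiv : Tendsto (fun N : ℕ => K/(N:ℝ)) atTop (nhds 0) :=
    tendsto_const_div_atTop_nhds_zero_nat K
  have hlowT : Tendsto (fun N : ℕ => u N - K/(N:ℝ)) atTop (nhds (α/(1-α)^3)) := by
    have := huT.sub hKdiv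
    simpa using this
  have haT : Tendsto a atTop (nhds (α/(1-α)^3)) := by
    apply tendsto_of_tendsto_of_tendsto_of_le_of_le' hlowT huT
    · filter_upwards [eventually_ge_atTop 1] with N hN
      have hNR : (0:ℝ) < (N:ℝ) := by exact_mod_cast hN
      have step : ∀ j ∈ Finset.range N,
          α^j * ((j:ℝ)*((j:ℝ)+1)/2) - α^j * ((j:ℝ)*((j:ℝ)+1)/2)^2/(N:ℝ)
            ≤ α^j * ((N:ℝ)*(1 - P N j)) := by
        intro j hj
        simp only [Finset.mem_range] at hj
        have hb := (hPbounds N hN j hj).2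
        have hα0 : (0:ℝ) ≤ α^j := by positivity
        have key : (j:ℝ)*((j:ℝ)+1)/2 - ((j:ℝ)*((j:ℝ)+1)/2)^2/(N:ℝ) ≤ (N:ℝ)*(1 - P N j) := by
          have e : (N:ℝ)*(((j:ℝ)*((j:ℝ)+1)/2)/(N:ℝ)) = (j:ℝ)*((j:ℝ)+1)/2 := by
            field_simp
          have e2 : (N:ℝ)*((((j:ℝ)*((j:ℝ)+1)/2)/(N:ℝ))^2) = ((j:ℝ)*((j:ℝ)+1)/2)^2/(N:ℝ) := by
            field_simp
          nlinarith [hb]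
        calc α^j * ((j:ℝ)*((j:ℝ)+1)/2) - α^j * ((j:ℝ)*((j:ℝ)+1)/2)^2/(N:ℝ)
            = α^j * ((j:ℝ)*((j:ℝ)+1)/2 - ((j:ℝ)*((j:ℝ)+1)/2)^2/(N:ℝ)) := by ring
          _ ≤ _ := mul_le_mul_of_nonneg_left key hα0
      have hsum := Finset.sum_le_sum step
      have hKbd : ∑ j ∈ Finset.range N, α^j * ((j:ℝ)*((j:ℝ)+1)/2)^2/(N:ℝ) ≤ K/(N:ℝ) := by
        rw [← Finset.sum_div]
        have hsumK : ∑ j ∈ Finset.range N, α^j * ((j:ℝ)*((j:ℝ)+1)/2)^2 ≤ K :=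
          Summable.sum_le_tsum (Finset.range N) (fun i _ => hgnn i) hgsum
        gcongr
      rw [Finset.sum_sub_distrib] at hsum
      have hud : u N = ∑ j ∈ Finset.range N, α^j * ((j:ℝ)*((j:ℝ)+1)/2) := rfl
      have had : a N = ∑ j ∈ Finset.range N, α^j * ((N:ℝ)*(1 - P N j)) := rfl
      rw [hud, had]
      linarith [hsum, hKbd]
    · filter_upwards [eventually_ge_atTop 1] with N hN
      have hNR : (0:ℝ) < (N:ℝ) := by exact_mod_cast hN
      apply Finset.sum_le_sum
      intro j hj
      simp only [Finset.mem_range] at hj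
      have hb := (hPbounds N hN j hj).1
      have hα0 : (0:ℝ) ≤ α^j := by positivity
      have key : (N:ℝ)*(1 - P N j) ≤ (j:ℝ)*((j:ℝ)+1)/2 := by
        have e : (N:ℝ)*(((j:ℝ)*((j:ℝ)+1)/2)/(N:ℝ)) = (j:ℝ)*((j:ℝ)+1)/2 := by
          field_simp
        nlinarith [hb]
      exact mul_le_mul_of_nonneg_left key hα0
  -- tail term N α^N /(1-α) → 0
  have hNt : Tendsto (fun N : ℕ => (N:ℝ)*α^N/(1-α)) atTop (nhds 0) := by
    have hs : Summable (fun N : ℕ => (N:ℝ)*α^N) := by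
      have := summable_pow_mul_geometric_of_norm_lt_one (R := ℝ) 1 hn
      simpa using this
    have h0 := hs.tendsto_atTop_zero
    have h1 := h0.div_const (1-α)
    simpa using h1
  have htot := haT.add hNt
  rw [add_zero] at htot
  apply htot.congr'
  filter_upwards [eventually_ge_atTop 1] with N hN
  have hNR : (0:ℝ) < (N:ℝ) := by exact_mod_cast hN
  have hNne : (N:ℝ) ≠ 0 := ne_of_gt hNR
  have termId : ∀ j ∈ Finset.range N, ((N-1).descFactorial j : ℝ) * (α/(N:ℝ))^j = α^j * P N j := by
    intro j hj
    simp only [Finset.mem_range] at hj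
    rw [Nat.descFactorial_eq_prod_range, Nat.cast_prod]
    have hcast : ∀ i ∈ Finset.range j, ((N-1-i : ℕ) : ℝ) = (N:ℝ)-1-(i:ℝ) := by
      intro i hi
      simp only [Finset.mem_range] at hi
      have : (N-1-i : ℕ) = N - (1+i) := by omega
      rw [this, Nat.cast_sub (by omega : 1+i ≤ N)]
      push_cast
      ring
    rw [Finset.prod_congr rfl hcast]
    have hpow : (α/(N:ℝ))^j = ∏ _i ∈ Finset.range j, (α/(N:ℝ)) := by
      rw [Finset.prod_const, Finset.card_range]
    rw [hpow, ← Finset.prod_mul_distrib]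
    have hper : ∀ i ∈ Finset.range j, ((N:ℝ)-1-(i:ℝ)) * (α/(N:ℝ)) = α * (1 - ((i:ℝ)+1)/(N:ℝ)) := by
      intro i hi
      field_simp
      ring
    rw [Finset.prod_congr rfl hper, Finset.prod_mul_distrib, Finset.prod_const, Finset.card_range]
  rw [Finset.sum_congr rfl termId]
  have hgeo : ∑ j ∈ Finset.range N, α^j = (1-α^N)/(1-α) := by
    rw [eq_div_iff (ne_of_gt h1α)]
    have := geom_sum_mul α N
    linarith
  have ea : a N = (N:ℝ) * ∑ j ∈ Finset.range N, α^j - (N:ℝ) * ∑ j ∈ Finset.range N, α^j * P N j := by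
    have had : a N = ∑ j ∈ Finset.range N, α^j * ((N:ℝ)*(1 - P N j)) := rfl
    rw [had, Finset.mul_sum, Finset.mul_sum, ← Finset.sum_sub_distrib]
    apply Finset.sum_congr rfl
    intro j hj
    ring
  show a N + (N:ℝ)*α^N/(1-α) = (N:ℝ) * (1/(1-α) - ∑ j ∈ Finset.range N, α^j * P N j)
  rw [ea, hgeo]
  field_simp
  ring

open Filter in
theorem tendsto_abelian_variance (α : ℝ) (hα : 0 < α) (hα' : α < 1) :
    Filter.Tendsto
      (fun N : ℕ =>
        (∑ b ∈ Finset.Icc 1 N, (b : ℝ) ^ 2 * abelianP N (α / N) b)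
          - (∑ b ∈ Finset.Icc 1 N, (b : ℝ) * abelianP N (α / N) b) ^ 2)
      Filter.atTop (nhds (α / (1 - α) ^ 3)) := by
  have h1α : (0:ℝ) < 1 - α := by linarith
  have hαne : α ≠ 0 := ne_of_gt hα
  -- limit of the auxiliary denominator
  have L1 : Tendsto (fun N : ℕ => 1 - α + α/(N:ℝ)) atTop (nhds (1-α)) := by
    have h := tendsto_const_div_atTop_nhds_zero_nat α
    have := (tendsto_const_nhds (α := ℕ) (f := atTop) (x := 1-α)).add h
    simpa using this
  have hS1lim : Tendsto (fun N : ℕ => 1/(1 - α + α/(N:ℝ))) atTop (nhds (1/(1-α))) := by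
    exact (tendsto_const_nhds).div L1 (ne_of_gt h1α)
  have hS1sq : Tendsto (fun N : ℕ => (1/(1 - α + α/(N:ℝ)))^2) atTop (nhds ((1/(1-α))^2)) :=
    hS1lim.pow 2
  have hfrac : Tendsto (fun N : ℕ => (1-α)/(1 - α + α/(N:ℝ))) atTop (nhds ((1-α)/(1-α))) :=
    (tendsto_const_nhds).div L1 (ne_of_gt h1α)
  have hcore := core_limit α hα hα'
  have hS2lim : Tendsto (fun N : ℕ => ((1-α)/(1 - α + α/(N:ℝ)))
      * ((1/α) * ((N:ℝ) * (1/(1-α)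
          - ∑ j ∈ Finset.range N, ((N-1).descFactorial j : ℝ) * (α/(N:ℝ))^j))))
      atTop (nhds (((1-α)/(1-α)) * ((1/α) * (α/(1-α)^3)))) :=
    hfrac.mul (tendsto_const_nhds.mul hcore)
  have htot := hS2lim.sub hS1sq
  have hval : ((1-α)/(1-α)) * ((1/α) * (α/(1-α)^3)) - (1/(1-α))^2 = α/(1-α)^3 := by
    field_simp
    ring
  rw [hval] at htot
  apply htot.congr'
  filter_upwards [eventually_ge_atTop 1] with N hN
  have hNR : (0:ℝ) < (N:ℝ) := by exact_mod_cast hN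
  have hNne : (N:ℝ) ≠ 0 := ne_of_gt hNR
  have hp : α/(N:ℝ) ≠ 0 := ne_of_gt (div_pos hα hNR)
  have e1 : (N:ℝ)*(α/(N:ℝ)) = α := by field_simp
  have h1 : 1 - (N:ℝ)*(α/(N:ℝ)) ≠ 0 := by rw [e1]; exact ne_of_gt h1α
  have e2 : 1-((N:ℝ)-1)*(α/(N:ℝ)) = 1 - α + α/(N:ℝ) := by field_simp; ring
  have hpos2 : (0:ℝ) < 1 - α + α/(N:ℝ) := by positivity
  have h2 : 1 - ((N:ℝ)-1)*(α/(N:ℝ)) ≠ 0 := by rw [e2]; exact ne_of_gt hpos2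
  rw [S1_eq N hN (α/(N:ℝ)) hp h1 h2, S2_eq N hN (α/(N:ℝ)) hp h1 h2]
  rw [e1, e2]
  have einv : 1/(α/(N:ℝ)) = (N:ℝ)/α := by
    rw [one_div_div]
  rw [einv]
  field_simp
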